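/- Suppose a and b are Drazin invertible with ab = λba, λ ≠ 0. Then the element b·b^π·a^π − a·a^π·b^π is nilpotent, where x^π = 1 − x·x^D. -/

import Mathlib

/-- `x` is a Drazin inverse of `a`. -/
def IsDrazinInverse {A : Type*} [Ring A] (a x : A) : Prop :=
  x * a * x = x ∧ a * x = x * a ∧ ∃ k : ℕ, a ^ (k + 1) * x = a ^ k

section Aux

variable {F A : Type*} [Field F] [Ring A] [Algebra F A]

private lemma smul_pow_commL {a x : A} {μ : F} (h : x * a = μ • (a * x)) :
    ∀ k : ℕ, x * a ^ k = μ ^ k • (a ^ k * x) := by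
  intro k
  induction k with
  | zero => simp
  | succ n ih =>
    rw [pow_succ, ← mul_assoc, ih, smul_mul_assoc, mul_assoc, h, mul_smul_comm,
      smul_smul, ← mul_assoc, pow_succ]

private lemma smul_pow_commR {a x : A} {μ : F} (h : a * x = μ • (x * a)) :
    ∀ k : ℕ, a ^ k * x = μ ^ k • (x * a ^ k) := by
  intro k
  induction k with
  | zero => simp
  | succ n ih =>
    rw [pow_succ, mul_assoc, h, mul_smul_comm, ← mul_assoc, ih, smul_mul_assoc,
      smul_smul, pow_succ, mul_comm (μ ^ n) μ, mul_assoc x (a ^ n) a]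

private lemma idem_pow {p : A} (hp : p * p = p) : ∀ n : ℕ, p ^ (n + 1) = p := by
  intro n
  induction n with
  | zero => simp
  | succ n ih => rw [pow_succ, ih, hp]

/-- The spectral idempotent `a*aD` commutes with any `x` that scalar-commutes with `a`. -/
private lemma idem_comm {a aD x : A} (hD : IsDrazinInverse a aD) {μ : F} (hμ : μ ≠ 0)
    (h : x * a = μ • (a * x)) : x * (a * aD) = (a * aD) * x := by
  obtain ⟨hr, hc, k, hk⟩ := hD
  set e := a * aD with he_def
  have hee : e * e = e := by
    show a * aD * (a * aD) = a * aD
    rw [mul_assoc, ← mul_assoc aD a aD, hr]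
  have cae : Commute a e := (Commute.refl a).mul_right hc
  have hak : a ^ (k + 1) * e = a ^ (k + 1) := by
    show a ^ (k + 1) * (a * aD) = a ^ (k + 1)
    rw [← mul_assoc, ← pow_succ, pow_succ', mul_assoc, hk, ← pow_succ']
  have he1 : e = a ^ (k + 1) * aD ^ (k + 1) := by
    have := (Commute.mul_pow hc (k + 1)).symm
    rw [idem_pow hee k] at this
    exact this.symm
  have he2 : e = aD ^ (k + 1) * a ^ (k + 1) := by
    have h' : aD * a = e := hc.symm
    have := (Commute.mul_pow (hc.symm : Commute aD a) (k + 1)).symm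
    rw [h', idem_pow hee k] at this
    exact this.symm
  have hxA : x * a ^ (k + 1) = μ ^ (k + 1) • (a ^ (k + 1) * x) := smul_pow_commL h (k + 1)
  have hAx : a ^ (k + 1) * x = (μ ^ (k + 1))⁻¹ • (x * a ^ (k + 1)) := by
    rw [hxA, inv_smul_smul₀ (pow_ne_zero _ hμ)]
  have h1 : (1 - e) * x * e = 0 := by
    have hea : (1 - e) * a ^ (k + 1) = 0 := by
      have : e * a ^ (k + 1) = a ^ (k + 1) := by
        rw [(cae.symm.pow_right (k + 1)).eq, hak]
      rw [sub_mul, one_mul, this, sub_self]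
    calc (1 - e) * x * e = (1 - e) * (x * a ^ (k + 1)) * aD ^ (k + 1) := by
          rw [he1, mul_assoc, ← mul_assoc x, ← mul_assoc]
      _ = μ ^ (k + 1) • ((1 - e) * a ^ (k + 1) * (x * aD ^ (k + 1))) := by
          rw [hxA, mul_smul_comm, smul_mul_assoc, mul_assoc, mul_assoc, mul_assoc]
      _ = 0 := by rw [hea, zero_mul, smul_zero]
  have h2 : e * x * (1 - e) = 0 := by
    have hae : a ^ (k + 1) * (1 - e) = 0 := by
      rw [mul_sub, mul_one, hak, sub_self]
    calc e * x * (1 - e) = aD ^ (k + 1) * (a ^ (k + 1) * x) * (1 - e) := by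
          rw [he2, mul_assoc (aD ^ (k + 1)) (a ^ (k + 1)) x]
      _ = (μ ^ (k + 1))⁻¹ • (aD ^ (k + 1) * x * (a ^ (k + 1) * (1 - e))) := by
          rw [hAx, mul_smul_comm, smul_mul_assoc, mul_assoc, mul_assoc, mul_assoc]
      _ = 0 := by rw [hae, mul_zero, smul_zero]
  have key : x * e - e * x = (1 - e) * x * e - e * x * (1 - e) := by noncomm_ring
  rw [h1, h2, sub_zero] at key
  exact sub_eq_zero.mp key

/-- Double-commutant property of the Drazin inverse. -/
private lemma drazin_double_comm (F : Type*) {A : Type*} [Field F] [Ring A] [Algebra F A]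
    {a aD x : A} (hD : IsDrazinInverse a aD)
    (hx : x * a = a * x) : x * aD = aD * x := by
  have hxe : x * (a * aD) = (a * aD) * x :=
    idem_comm hD (one_ne_zero (α := F)) (by rw [one_smul]; exact hx)
  obtain ⟨hr, hc, k, hk⟩ := hD
  have heaD : (a * aD) * aD = aD := by rw [hc]; exact hr
  have haDe : aD * (a * aD) = aD := by rw [← mul_assoc]; exact hr
  have hast : a * (aD * x) = a * (x * aD) := by
    calc a * (aD * x) = (a * aD) * x := (mul_assoc _ _ _).symm
      _ = x * (a * aD) := hxe.symm
      _ = (x * a) * aD := (mul_assoc _ _ _).symm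
      _ = (a * x) * aD := by rw [hx]
      _ = a * (x * aD) := mul_assoc _ _ _
  have h2' := congrArg (fun y => aD * y) hast
  have h2 : (a * aD) * (aD * x) = (a * aD) * (x * aD) := by
    calc (a * aD) * (aD * x) = (aD * a) * (aD * x) := by rw [← hc]
      _ = aD * (a * (aD * x)) := mul_assoc _ _ _
      _ = aD * (a * (x * aD)) := h2'
      _ = (aD * a) * (x * aD) := (mul_assoc _ _ _).symm
      _ = (a * aD) * (x * aD) := by rw [hc]
  have hL : (a * aD) * (aD * x) = aD * x := by rw [← mul_assoc, heaD]
  have hR : (a * aD) * (x * aD) = x * aD := by rw [← mul_assoc, ← hxe, mul_assoc, heaD]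
  rw [hL, hR] at h2
  exact h2.symm

/-- `a * aπ` is nilpotent. -/
private lemma drazin_nilp {A : Type*} [Ring A] {a aD : A} (hD : IsDrazinInverse a aD) :
    ∃ n : ℕ, (a * (1 - a * aD)) ^ (n + 1) = 0 := by
  obtain ⟨hr, hc, k, hk⟩ := hD
  set e := a * aD with he_def
  have hee : e * e = e := by
    show a * aD * (a * aD) = a * aD
    rw [mul_assoc, ← mul_assoc aD a aD, hr]
  have hak : a ^ (k + 1) * e = a ^ (k + 1) := by
    show a ^ (k + 1) * (a * aD) = a ^ (k + 1)
    rw [← mul_assoc, ← pow_succ, pow_succ', mul_assoc, hk, ← pow_succ']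
  have cae : Commute a e := (Commute.refl a).mul_right hc
  have cap : Commute a (1 - e) := (Commute.one_right a).sub_right cae
  have hpp : (1 - e) * (1 - e) = 1 - e := by
    have : (1 - e) * (1 - e) = 1 - e - (e - e * e) := by noncomm_ring
    rw [hee, sub_self, sub_zero] at this
    exact this
  refine ⟨k, ?_⟩
  rw [Commute.mul_pow cap, idem_pow hpp, mul_sub, mul_one, hak, sub_self]

/-- Difference of scalar-commuting nilpotents is nilpotent. -/
private lemma nilp_sub {u v : A} {l : F} (hq : v * u = l • (u * v))
    (hu : IsNilpotent u) (hv : IsNilpotent v) : IsNilpotent (u - v) := by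
  obtain ⟨p, hp⟩ := hu
  obtain ⟨q, hq0⟩ := hv
  set S : ℕ → Set A := fun n => {x : A | ∃ i j : ℕ, i + j = n ∧ x = u ^ i * v ^ j} with hS
  have key : ∀ n : ℕ, (u - v) ^ n ∈ Submodule.span F (S n) := by
    intro n
    induction n with
    | zero =>
      refine Submodule.subset_span ⟨0, 0, rfl, by simp⟩
    | succ n ih =>
      have hmap : ∀ x ∈ S n, x * (u - v) ∈ Submodule.span F (S (n + 1)) := by
        rintro x ⟨i, j, hij, rfl⟩
        have hvu : v ^ j * u = l ^ j • (u * v ^ j) := smul_pow_commR hq j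
        have hx : u ^ i * v ^ j * (u - v) =
            l ^ j • (u ^ (i + 1) * v ^ j) - u ^ i * v ^ (j + 1) := by
          rw [mul_sub, mul_assoc, hvu, mul_smul_comm, ← mul_assoc,
            pow_succ, pow_succ, mul_assoc (u ^ i) (v ^ j) v]
        rw [hx]
        exact sub_mem (Submodule.smul_mem _ _
            (Submodule.subset_span ⟨i + 1, j, by omega, rfl⟩))
          (Submodule.subset_span ⟨i, j + 1, by omega, rfl⟩)
      have hmem : (u - v) ^ n * (u - v) ∈
          Submodule.map (LinearMap.mulRight F (u - v)) (Submodule.span F (S n)) :=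
        Submodule.mem_map_of_mem ih
      rw [Submodule.map_span] at hmem
      rw [pow_succ]
      refine Submodule.span_le.mpr ?_ hmem
      rintro _ ⟨x, hx, rfl⟩
      exact hmap x hx
  have hzero : S (p + q) ⊆ (↑(⊥ : Submodule F A) : Set A) := by
    rintro x ⟨i, j, hij, rfl⟩
    simp only [Submodule.bot_coe, Set.mem_singleton_iff]
    rcases le_or_gt p i with hpi | hpi
    · rw [pow_eq_zero_of_le hpi hp, zero_mul]
    · have : q ≤ j := by omega
      rw [pow_eq_zero_of_le this hq0, mul_zero]
  have hb := Submodule.span_le.mpr hzero (key (p + q))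
  exact ⟨p + q, (Submodule.mem_bot F).mp hb⟩

end Aux

theorem stmt7 {F A : Type*} [Field F] [Ring A] [Algebra F A]
    (a aD b bD : A) (haD : IsDrazinInverse a aD) (hbD : IsDrazinInverse b bD)
    (l : F) (hl : l ≠ 0) (h : a * b = l • (b * a)) :
    IsNilpotent (b * (1 - b * bD) * (1 - a * aD) - a * (1 - a * aD) * (1 - b * bD)) := by
  obtain ⟨har, hac, k, hak⟩ := haD
  obtain ⟨hbr, hbc, m, hbm⟩ := hbD
  have haD' : IsDrazinInverse a aD := ⟨har, hac, k, hak⟩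
  have hbD' : IsDrazinInverse b bD := ⟨hbr, hbc, m, hbm⟩
  set e := a * aD with he_def
  set f := b * bD with hf_def
  have hba : b * a = l⁻¹ • (a * b) := by rw [h, inv_smul_smul₀ hl]
  have heb : b * e = e * b := idem_comm haD' (inv_ne_zero hl) hba
  have hfa : a * f = f * a := idem_comm hbD' hl h
  have hebD : e * bD = bD * e := drazin_double_comm F hbD' heb.symm
  have hfaD : f * aD = aD * f := drazin_double_comm F haD' hfa.symm
  have cae : Commute a e := (Commute.refl a).mul_right hac
  have cbf : Commute b f := (Commute.refl b).mul_right hbc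
  have ceb : Commute e b := heb.symm
  have cef : Commute e f := ceb.mul_right hebD
  have cfa : Commute f a := hfa.symm
  set p := (1 : A) - e with hp_def
  set q := (1 : A) - f with hq_def
  have cpb : Commute p b := (Commute.one_left b).sub_left ceb
  have cpa : Commute p a := (Commute.one_left a).sub_left cae.symm
  have cqa : Commute q a := (Commute.one_left a).sub_left cfa
  have cqb : Commute q b := (Commute.one_left b).sub_left cbf.symm
  have cpq : Commute p q :=
    (Commute.one_left q).sub_left ((Commute.one_right e).sub_right cef)
  have hee : e * e = e := by
    show a * aD * (a * aD) = a * aD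
    rw [mul_assoc, ← mul_assoc aD a aD, har]
  have hff : f * f = f := by
    show b * bD * (b * bD) = b * bD
    rw [mul_assoc, ← mul_assoc bD b bD, hbr]
  have hpp : p * p = p := by
    have hzz : ((1 : A) - e) * (1 - e) = 1 - e - (e - e * e) := by noncomm_ring
    rw [hee, sub_self, sub_zero] at hzz
    exact hzz
  have hqq : q * q = q := by
    have hzz : ((1 : A) - f) * (1 - f) = 1 - f - (f - f * f) := by noncomm_ring
    rw [hff, sub_self, sub_zero] at hzz
    exact hzz
  set u := b * q with hu_def
  set v := a * p with hv_def
  have hu : IsNilpotent u := by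
    obtain ⟨n, hn⟩ := drazin_nilp hbD'
    exact ⟨n + 1, hn⟩
  have hv : IsNilpotent v := by
    obtain ⟨n, hn⟩ := drazin_nilp haD'
    exact ⟨n + 1, hn⟩
  have hvu : v * u = l • (u * v) := by
    have h1 : v * u = (a * b) * (p * q) := by
      rw [hv_def, hu_def, mul_assoc, ← mul_assoc p b q, cpb.eq, mul_assoc b p q,
        ← mul_assoc, ← mul_assoc]
    have h2 : u * v = (b * a) * (p * q) := by
      rw [hu_def, hv_def, mul_assoc, ← mul_assoc q a p, cqa.eq, mul_assoc a q p,
        ← cpq.eq, ← mul_assoc, ← mul_assoc]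
    rw [h1, h2, h, smul_mul_assoc]
  have hdiff : IsNilpotent (u - v) := nilp_sub hvu hu hv
  have cup : Commute u p := cpb.symm.mul_left cpq.symm
  have cuq : Commute u q := cqb.symm.mul_left (Commute.refl q)
  have cvp : Commute v p := cpa.symm.mul_left (Commute.refl p)
  have cvq : Commute v q := cqa.symm.mul_left cpq
  have cdiff : Commute (u - v) (p * q) :=
    ((cup.mul_right cuq).sub_left (cvp.mul_right cvq))
  have h3 : u * (p * q) = u * p := by
    rw [hu_def, mul_assoc, mul_assoc, ← mul_assoc q p q, cpq.symm.eq, mul_assoc p q q, hqq]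
  have h4 : v * (p * q) = v * q := by
    rw [hv_def, mul_assoc, mul_assoc, ← mul_assoc p p q, hpp]
  have hgoal : u * p - v * q = (u - v) * (p * q) := by
    rw [sub_mul, h3, h4]
  rw [hgoal]
  exact cdiff.isNilpotent_mul_right hdiff
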